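/- Let A be an ℕ-graded k-algebra generated in degrees 0 and 1. If *₁ and *₂ are two 0-equivariant star products on A such that f *₁ a = f *₂ a for all f ∈ A₁ and all a ∈ A, then *₁ = *₂, i.e. a *₁ b = a *₂ b for all a, b ∈ A. (In other words, every 0-equivariant star product on A is uniquely determined by the k-linear maps a ↦ f * a − f a for f ∈ A₁.) -/

import Mathlib

/-- A star product on an `ℕ`-graded `k`-algebra `A = ⊕ⱼ 𝒜 j`: an associative
`k`-bilinear operation `mul : A → A → A` such that for `a ∈ 𝒜 m` and `b ∈ 𝒜 n`
the difference `mul a b - a * b` lies in `A_{<m+n} = ⊕_{j<m+n} 𝒜 j`. -/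
structure StarProduct (k : Type*) {A : Type*} [Field k] [Ring A] [Algebra k A]
    (𝒜 : ℕ → Submodule k A) where
  mul : A → A → A
  add_left : ∀ a b c : A, mul (a + b) c = mul a c + mul b c
  add_right : ∀ a b c : A, mul a (b + c) = mul a b + mul a c
  smul_left : ∀ (r : k) (a b : A), mul (r • a) b = r • mul a b
  smul_right : ∀ (r : k) (a b : A), mul a (r • b) = r • mul a b
  assoc : ∀ a b c : A, mul (mul a b) c = mul a (mul b c)
  lower : ∀ (m n : ℕ) (a b : A), a ∈ 𝒜 m → b ∈ 𝒜 n →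
    mul a b - a * b ∈ ⨆ j < m + n, 𝒜 j

/-- A star product is `0`-equivariant if `a * h = ah` and `h * a = ha` for all
`h` of degree `0` and all `a`. -/
def StarProduct.ZeroEquivariant {k A : Type*} [Field k] [Ring A] [Algebra k A]
    {𝒜 : ℕ → Submodule k A} (s : StarProduct k 𝒜) : Prop :=
  ∀ h ∈ 𝒜 0, ∀ a : A, s.mul a h = a * h ∧ s.mul h a = h * a

section Aux

variable {k A : Type*} [Field k] [Ring A] [Algebra k A]

/-- Auxiliary chain of submodules: `auxN 𝒜 n = 𝒜 1 * ⋯ * 𝒜 1 * 𝒜 0`. -/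
def auxN (𝒜 : ℕ → Submodule k A) : ℕ → Submodule k A
  | 0 => 𝒜 0
  | n + 1 => 𝒜 1 * auxN 𝒜 n

theorem auxN_le (𝒜 : ℕ → Submodule k A) [GradedAlgebra 𝒜] : ∀ n, auxN 𝒜 n ≤ 𝒜 n := by
  intro n
  induction n with
  | zero => exact le_rfl
  | succ n ih =>
    refine Submodule.mul_le.mpr fun x hx y hy => ?_
    have := SetLike.mul_mem_graded hx (ih hy)
    simpa [add_comm] using this

theorem auxN_zero_mul (𝒜 : ℕ → Submodule k A) [GradedAlgebra 𝒜] (j : ℕ) :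
    𝒜 0 * auxN 𝒜 j ≤ auxN 𝒜 j := by
  induction j with
  | zero =>
    refine Submodule.mul_le.mpr fun x hx y hy => ?_
    simpa [auxN] using SetLike.mul_mem_graded hx hy
  | succ j ih =>
    show 𝒜 0 * (𝒜 1 * auxN 𝒜 j) ≤ 𝒜 1 * auxN 𝒜 j
    rw [← mul_assoc]
    refine mul_le_mul' ?_ le_rfl
    refine Submodule.mul_le.mpr fun x hx y hy => ?_
    simpa using SetLike.mul_mem_graded hx hy

theorem auxN_mul (𝒜 : ℕ → Submodule k A) [GradedAlgebra 𝒜] (i j : ℕ) :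
    auxN 𝒜 i * auxN 𝒜 j ≤ auxN 𝒜 (i + j) := by
  induction i with
  | zero =>
    rw [Nat.zero_add]
    exact auxN_zero_mul 𝒜 j
  | succ i ih =>
    have e : i + 1 + j = (i + j) + 1 := by omega
    rw [e]
    show 𝒜 1 * auxN 𝒜 i * auxN 𝒜 j ≤ 𝒜 1 * auxN 𝒜 (i + j)
    rw [mul_assoc]
    exact mul_le_mul' le_rfl ih

theorem mem_auxN_of_mem (𝒜 : ℕ → Submodule k A) [GradedAlgebra 𝒜]
    (hgen : Algebra.adjoin k ((𝒜 0 : Set A) ∪ (𝒜 1 : Set A)) = ⊤)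
    {n : ℕ} {a : A} (ha : a ∈ 𝒜 n) : a ∈ auxN 𝒜 n := by
  classical
  have key : ∀ x ∈ Algebra.adjoin k ((𝒜 0 : Set A) ∪ (𝒜 1 : Set A)),
      ∀ m : ℕ, (DirectSum.decompose 𝒜 x m : A) ∈ auxN 𝒜 m := by
    intro x hx
    induction hx using Algebra.adjoin_induction with
    | mem x hx =>
      intro m
      rcases hx with hx | hx
      · rcases Nat.eq_zero_or_pos m with rfl | hm
        · rw [DirectSum.decompose_of_mem_same 𝒜 hx]; exact hx
        · rw [DirectSum.decompose_of_mem_ne 𝒜 hx (by omega)]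
          exact Submodule.zero_mem _
      · rcases eq_or_ne m 1 with rfl | hm
        · rw [DirectSum.decompose_of_mem_same 𝒜 hx]
          show x ∈ 𝒜 1 * auxN 𝒜 0
          simpa [auxN] using Submodule.mul_mem_mul hx (SetLike.one_mem_graded 𝒜)
        · rw [DirectSum.decompose_of_mem_ne 𝒜 hx (Ne.symm hm)]
          exact Submodule.zero_mem _
    | algebraMap r =>
      intro m
      have h0 : algebraMap k A r ∈ 𝒜 0 := SetLike.algebraMap_mem_graded 𝒜 r
      rcases Nat.eq_zero_or_pos m with rfl | hm
      · rw [DirectSum.decompose_of_mem_same 𝒜 h0]; exact h0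
      · rw [DirectSum.decompose_of_mem_ne 𝒜 h0 (by omega)]
        exact Submodule.zero_mem _
    | add x y hx hy ihx ihy =>
      intro m
      rw [DirectSum.decompose_add, DirectSum.add_apply, Submodule.coe_add]
      exact Submodule.add_mem _ (ihx m) (ihy m)
    | mul x y hx hy ihx ihy =>
      intro m
      rw [DirectSum.decompose_mul, DirectSum.coe_mul_apply]
      refine Submodule.sum_mem _ fun ij hij => ?_
      simp only [Finset.mem_filter] at hij
      have := Submodule.mul_mem_mul (ihx ij.1) (ihy ij.2)
      have h2 := auxN_mul 𝒜 ij.1 ij.2 this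
      rwa [hij.2] at h2
  have hx : a ∈ Algebra.adjoin k ((𝒜 0 : Set A) ∪ (𝒜 1 : Set A)) := by
    rw [hgen]; trivial
  have := key a hx n
  rwa [DirectSum.decompose_of_mem_same 𝒜 ha] at this

end Aux


/-- If `A` is an `ℕ`-graded `k`-algebra generated in degrees `0` and `1`, then any
two `0`-equivariant star products on `A` which agree on pairs `(f, a)` with
`f ∈ A₁`, `a ∈ A` are equal. -/
theorem zeroEquivariant_starProduct_ext
    {k A : Type*} [Field k] [Ring A] [Algebra k A]
    (𝒜 : ℕ → Submodule k A) [GradedAlgebra 𝒜]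
    (hgen : Algebra.adjoin k ((𝒜 0 : Set A) ∪ (𝒜 1 : Set A)) = ⊤)
    (s₁ s₂ : StarProduct k 𝒜)
    (h₁ : s₁.ZeroEquivariant) (h₂ : s₂.ZeroEquivariant)
    (hagree : ∀ f ∈ 𝒜 1, ∀ a : A, s₁.mul f a = s₂.mul f a) :
    ∀ a b : A, s₁.mul a b = s₂.mul a b := by
  classical
  set T : Submodule k A :=
    { carrier := { a | ∀ b : A, s₁.mul a b = s₂.mul a b }
      add_mem' := by
        intro a a' ha ha' b
        rw [s₁.add_left, s₂.add_left, ha b, ha' b]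
      zero_mem' := by
        intro b
        have e1 : s₁.mul 0 b = 0 := by
          have := s₁.smul_left 0 0 b; simpa using this
        have e2 : s₂.mul 0 b = 0 := by
          have := s₂.smul_left 0 0 b; simpa using this
        rw [e1, e2]
      smul_mem' := by
        intro r a ha b
        rw [s₁.smul_left, s₂.smul_left, ha b] } with hT
  have hTmem : ∀ a : A, a ∈ T ↔ ∀ b : A, s₁.mul a b = s₂.mul a b := fun a => Iff.rfl
  -- T is closed under the star product s₁.mul
  have hstar : ∀ x ∈ T, ∀ y ∈ T, s₁.mul x y ∈ T := by
    intro x hx y hy b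
    rw [s₁.assoc, hy b, hx (s₂.mul y b), ← s₂.assoc, ← hx y]
  -- 𝒜 0 ⊆ T and 𝒜 1 ⊆ T
  have hA0 : ∀ h ∈ 𝒜 0, h ∈ T := fun h hh b => by
    rw [(h₁ h hh b).2, (h₂ h hh b).2]
  have hA1 : ∀ f ∈ 𝒜 1, f ∈ T := fun f hf b => hagree f hf b
  -- main induction: 𝒜 n ⊆ T for all n
  have main : ∀ n : ℕ, ∀ a ∈ 𝒜 n, a ∈ T := by
    intro n
    induction n using Nat.strong_induction_on with
    | _ n ih =>
      intro a ha
      have haN : a ∈ auxN 𝒜 n := mem_auxN_of_mem 𝒜 hgen ha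
      match n, ih with
      | 0, _ => exact hA0 a ha
      | n + 1, ih =>
        -- a ∈ 𝒜 1 * auxN 𝒜 n
        refine Submodule.mul_induction_on (haN : a ∈ 𝒜 1 * auxN 𝒜 n) ?_
          (fun x y hx hy => T.add_mem hx hy)
        intro x hx y hy
        have hyA : y ∈ 𝒜 n := auxN_le 𝒜 n hy
        have hyT : y ∈ T := ih n (Nat.lt_succ_self n) y hyA
        have hd : s₁.mul x y - x * y ∈ ⨆ j < 1 + n, 𝒜 j := s₁.lower 1 n x y hx hyA
        have hlow : (⨆ j < 1 + n, 𝒜 j) ≤ T := by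
          refine iSup_le fun j => iSup_le fun hj => fun z hz => ?_
          exact ih j (by omega) z hz
        have hdT : s₁.mul x y - x * y ∈ T := hlow hd
        have hsT : s₁.mul x y ∈ T := hstar x (hA1 x hx) y hyT
        have : x * y = s₁.mul x y - (s₁.mul x y - x * y) := (sub_sub_cancel _ _).symm
        rw [this]
        exact T.sub_mem hsT hdT
  -- conclude
  intro a b
  have : a ∈ T := by
    have : a = ∑ i ∈ (DirectSum.decompose 𝒜 a).support, (DirectSum.decompose 𝒜 a i : A) :=
      (DirectSum.sum_support_decompose 𝒜 a).symm
    rw [this]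
    exact T.sum_mem fun i _ => main i _ (SetLike.coe_mem _)
  exact this b
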